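/- Let K, ξ ∈ ℝ with K ≠ 0, and let μ, ν ∈ ℝ with μ ≠ ν and C₁, C₂ ∈ ℂ both nonzero. If A(T) = C₁·e^{iμT} + C₂·e^{iνT} satisfies A'(T) = (K/4)·e^{iξT}·conj(A(T)) for all T ∈ ℝ, then μ + ν = ξ and μ·ν = K²/16; consequently ξ² > K²/4 and {μ, ν} = {(ξ + √(ξ²−K²/4))/2, (ξ − √(ξ²−K²/4))/2}. -/

import Mathlib

lemma expDeriv (c : ℂ) (T : ℝ) :
    HasDerivAt (fun s : ℝ => Complex.exp (c * s)) (c * Complex.exp (c * T)) T := by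
  have h : HasDerivAt (fun s : ℝ => (s : ℂ)) 1 T := by
    simpa using (hasDerivAt_id T).ofReal_comp
  have := (h.const_mul c).cexp
  simpa [mul_comm] using this

/-- If A(T) = C₁e^{iμT} + C₂e^{iνT} (with μ ≠ ν and C₁, C₂ ≠ 0) solves the
amplitude equation A' = (K/4)e^{iξT}conj(A), then μ + ν = ξ, μν = K²/16, hence
ξ² > K²/4 and {μ, ν} = {(ξ ± √(ξ²−K²/4))/2}. -/
theorem stmt_4 (K ξ : ℝ) (hK : K ≠ 0) (μ ν : ℝ) (hμν : μ ≠ ν) (C₁ C₂ : ℂ)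
    (hC₁ : C₁ ≠ 0) (hC₂ : C₂ ≠ 0)
    (hODE : ∀ T : ℝ,
      deriv (fun s : ℝ =>
          C₁ * Complex.exp (Complex.I * (μ : ℂ) * (s : ℂ))
            + C₂ * Complex.exp (Complex.I * (ν : ℂ) * (s : ℂ))) T =
        ((K : ℂ) / 4) * Complex.exp (Complex.I * (ξ : ℂ) * (T : ℂ)) *
          (starRingEnd ℂ)
            (C₁ * Complex.exp (Complex.I * (μ : ℂ) * (T : ℂ))
              + C₂ * Complex.exp (Complex.I * (ν : ℂ) * (T : ℂ)))) :
    μ + ν = ξ ∧ μ * ν = K ^ 2 / 16 ∧ ξ ^ 2 > K ^ 2 / 4 ∧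
      ({μ, ν} : Set ℝ) =
        {(ξ + Real.sqrt (ξ ^ 2 - K ^ 2 / 4)) / 2,
         (ξ - Real.sqrt (ξ ^ 2 - K ^ 2 / 4)) / 2} := by
  have hA : ∀ T : ℝ, HasDerivAt (fun s : ℝ =>
          C₁ * Complex.exp (Complex.I * (μ : ℂ) * (s : ℂ))
            + C₂ * Complex.exp (Complex.I * (ν : ℂ) * (s : ℂ)))
      (C₁ * ((Complex.I * μ) * Complex.exp (Complex.I * μ * T))
        + C₂ * ((Complex.I * ν) * Complex.exp (Complex.I * ν * T))) T := by
    intro T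
    exact ((expDeriv (Complex.I * μ) T).const_mul C₁).add ((expDeriv (Complex.I * ν) T).const_mul C₂)
  have eq1 : ∀ T : ℝ,
      C₁ * ((Complex.I * μ) * Complex.exp (Complex.I * μ * T))
        + C₂ * ((Complex.I * ν) * Complex.exp (Complex.I * ν * T)) =
      ((K : ℂ) / 4) * Complex.exp (Complex.I * ξ * T) *
        ((starRingEnd ℂ) C₁ * Complex.exp (-(Complex.I * μ * T))
          + (starRingEnd ℂ) C₂ * Complex.exp (-(Complex.I * ν * T))) := by
    intro T
    have h := hODE T
    rw [(hA T).deriv] at h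
    rw [h]
    simp [map_add, map_mul, ← Complex.exp_conj, Complex.conj_I, Complex.conj_ofReal]
  have Z : ∀ T : ℝ, ((-(μ:ℂ)^2 + ξ*μ - K^2/16) * C₁) * Complex.exp (Complex.I * μ * T)
      + ((-(ν:ℂ)^2 + ξ*ν - K^2/16) * C₂) * Complex.exp (Complex.I * ν * T) = 0 := by
    -- conjugated eq1
    have conjEq1 : ∀ T : ℝ,
        (starRingEnd ℂ) C₁ * ((-(Complex.I * μ)) * Complex.exp (-(Complex.I * μ * T)))
          + (starRingEnd ℂ) C₂ * ((-(Complex.I * ν)) * Complex.exp (-(Complex.I * ν * T))) =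
        ((K : ℂ) / 4) * Complex.exp (-(Complex.I * ξ * T)) *
          (C₁ * Complex.exp (Complex.I * μ * T) + C₂ * Complex.exp (Complex.I * ν * T)) := by
      intro T
      have h := congrArg (starRingEnd ℂ) (eq1 T)
      simp only [map_add, map_mul, ← Complex.exp_conj, Complex.conj_I, Complex.conj_ofReal,
        RingHomCompTriple.comp_apply, RingHom.id_apply, map_div₀, map_ofNat,
        Complex.conj_conj, map_neg] at h
      convert h using 2 <;> ring_nf
    -- derivative of both sides of eq1
    have eq2 : ∀ T : ℝ,
        C₁ * ((Complex.I * μ) * ((Complex.I * μ) * Complex.exp (Complex.I * μ * T)))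
          + C₂ * ((Complex.I * ν) * ((Complex.I * ν) * Complex.exp (Complex.I * ν * T))) =
        ((K : ℂ) / 4) * ((Complex.I * ξ) * Complex.exp (Complex.I * ξ * T)) *
          ((starRingEnd ℂ) C₁ * Complex.exp (-(Complex.I * μ * T))
            + (starRingEnd ℂ) C₂ * Complex.exp (-(Complex.I * ν * T)))
        + ((K : ℂ) / 4) * Complex.exp (Complex.I * ξ * T) *
          ((starRingEnd ℂ) C₁ * ((-(Complex.I * μ)) * Complex.exp (-(Complex.I * μ * T)))
            + (starRingEnd ℂ) C₂ * ((-(Complex.I * ν)) * Complex.exp (-(Complex.I * ν * T)))) := by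
      intro T
      have hfun : (fun T : ℝ =>
          C₁ * ((Complex.I * μ) * Complex.exp (Complex.I * μ * T))
            + C₂ * ((Complex.I * ν) * Complex.exp (Complex.I * ν * T))) =
          (fun T : ℝ => ((K : ℂ) / 4) * Complex.exp (Complex.I * ξ * T) *
          ((starRingEnd ℂ) C₁ * Complex.exp (-(Complex.I * μ * T))
            + (starRingEnd ℂ) C₂ * Complex.exp (-(Complex.I * ν * T)))) := funext eq1
      have hL : HasDerivAt (fun T : ℝ =>
          C₁ * ((Complex.I * μ) * Complex.exp (Complex.I * μ * T))
            + C₂ * ((Complex.I * ν) * Complex.exp (Complex.I * ν * T)))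
          (C₁ * ((Complex.I * μ) * ((Complex.I * μ) * Complex.exp (Complex.I * μ * T)))
          + C₂ * ((Complex.I * ν) * ((Complex.I * ν) * Complex.exp (Complex.I * ν * T)))) T := by
        have h0 := (((expDeriv (Complex.I * μ) T).const_mul (C₁ * (Complex.I * μ))).add
          ((expDeriv (Complex.I * ν) T).const_mul (C₂ * (Complex.I * ν))))
        have hfun2 : (fun T : ℝ =>
            C₁ * ((Complex.I * μ) * Complex.exp (Complex.I * μ * T))
              + C₂ * ((Complex.I * ν) * Complex.exp (Complex.I * ν * T))) =
            (fun T : ℝ => C₁ * (Complex.I * μ) * Complex.exp (Complex.I * μ * T)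
              + C₂ * (Complex.I * ν) * Complex.exp (Complex.I * ν * T)) := by
          funext s; ring
        rw [hfun2]
        exact h0.congr_deriv (by ring)
      have hexpneg : ∀ (c : ℂ), HasDerivAt (fun s : ℝ => Complex.exp (-(c * s)))
          ((-c) * Complex.exp (-(c * T))) T := by
        intro c
        have := expDeriv (-c) T
        simpa [neg_mul] using this
      have hR : HasDerivAt (fun T : ℝ => ((K : ℂ) / 4) * Complex.exp (Complex.I * ξ * T) *
          ((starRingEnd ℂ) C₁ * Complex.exp (-(Complex.I * μ * T))
            + (starRingEnd ℂ) C₂ * Complex.exp (-(Complex.I * ν * T))))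
          (((K : ℂ) / 4) * ((Complex.I * ξ) * Complex.exp (Complex.I * ξ * T)) *
          ((starRingEnd ℂ) C₁ * Complex.exp (-(Complex.I * μ * T))
            + (starRingEnd ℂ) C₂ * Complex.exp (-(Complex.I * ν * T)))
        + ((K : ℂ) / 4) * Complex.exp (Complex.I * ξ * T) *
          ((starRingEnd ℂ) C₁ * ((-(Complex.I * μ)) * Complex.exp (-(Complex.I * μ * T)))
            + (starRingEnd ℂ) C₂ * ((-(Complex.I * ν)) * Complex.exp (-(Complex.I * ν * T))))) T := by
        have h1 : HasDerivAt (fun T : ℝ => ((K : ℂ) / 4) * Complex.exp (Complex.I * ξ * T))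
            (((K : ℂ) / 4) * ((Complex.I * ξ) * Complex.exp (Complex.I * ξ * T))) T :=
          (expDeriv (Complex.I * ξ) T).const_mul _
        have h2 := ((hexpneg (Complex.I * μ)).const_mul ((starRingEnd ℂ) C₁)).add
          ((hexpneg (Complex.I * ν)).const_mul ((starRingEnd ℂ) C₂))
        exact h1.mul h2
      have hd := congrFun (congrArg deriv hfun) T
      rw [hL.deriv, hR.deriv] at hd
      exact hd
    intro T
    have hF : Complex.exp (Complex.I * ξ * T) * Complex.exp (-(Complex.I * ξ * T)) = 1 := by
      rw [← Complex.exp_add]; simp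
    linear_combination (eq2 T) - Complex.I * ξ * (eq1 T)
      + ((K:ℂ)/4) * Complex.exp (Complex.I * ξ * T) * (conjEq1 T)
      + ((K:ℂ)^2/16) * (C₁ * Complex.exp (Complex.I * μ * T) + C₂ * Complex.exp (Complex.I * ν * T)) * hF
      + ((ξ - (μ:ℂ)) * μ * C₁ * Complex.exp (Complex.I * μ * T)
         + (ξ - (ν:ℂ)) * ν * C₂ * Complex.exp (Complex.I * ν * T)) * Complex.I_mul_I
  have hsub : (ν - μ : ℝ) ≠ 0 := sub_ne_zero.mpr (Ne.symm hμν)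
  set T0 : ℝ := Real.pi / (ν - μ) with hT0
  have h0 := Z 0
  simp only [Complex.ofReal_zero, mul_zero, Complex.exp_zero, mul_one] at h0
  have hE2 : Complex.exp (Complex.I * ν * T0) = - Complex.exp (Complex.I * μ * T0) := by
    have h1 : Complex.exp (Complex.I * ν * T0) =
        Complex.exp (Complex.I * μ * T0) * Complex.exp (Complex.I * ((ν - μ) * T0 : ℝ)) := by
      rw [← Complex.exp_add]
      push_cast
      ring_nf
    have h2 : ((ν - μ) * T0 : ℝ) = Real.pi := by
      rw [hT0]; field_simp
    rw [h1, h2, show Complex.I * (Real.pi:ℂ) = (Real.pi:ℂ) * Complex.I from mul_comm _ _, Complex.exp_pi_mul_I]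
    ring
  have hT := Z T0
  rw [hE2] at hT
  have hE1 : Complex.exp (Complex.I * μ * T0) ≠ 0 := Complex.exp_ne_zero _
  have hPQ : ((-(μ:ℂ)^2 + ξ*μ - K^2/16) * C₁) - ((-(ν:ℂ)^2 + ξ*ν - K^2/16) * C₂) = 0 := by
    have : (((-(μ:ℂ)^2 + ξ*μ - K^2/16) * C₁) - ((-(ν:ℂ)^2 + ξ*ν - K^2/16) * C₂))
        * Complex.exp (Complex.I * μ * T0) = 0 := by linear_combination hT
    exact (mul_eq_zero.mp this).resolve_right hE1
  have hP : (-(μ:ℂ)^2 + ξ*μ - K^2/16) = 0 := by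
    have h1 : (-(μ:ℂ)^2 + ξ*μ - K^2/16) * C₁ = 0 := by linear_combination (h0 + hPQ) / 2
    exact (mul_eq_zero.mp h1).resolve_right hC₁
  have hQ : (-(ν:ℂ)^2 + ξ*ν - K^2/16) = 0 := by
    have h1 : (-(ν:ℂ)^2 + ξ*ν - K^2/16) * C₂ = 0 := by linear_combination (h0 - hPQ) / 2
    exact (mul_eq_zero.mp h1).resolve_right hC₂
  have hμR : -μ^2 + ξ*μ - K^2/16 = 0 := by
    exact_mod_cast hP
  have hνR : -ν^2 + ξ*ν - K^2/16 = 0 := by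
    exact_mod_cast hQ
  have hsum : μ + ν = ξ := by
    have h : (μ - ν) * (μ + ν - ξ) = 0 := by linear_combination hνR - hμR
    rcases mul_eq_zero.mp h with h | h
    · exact absurd (sub_eq_zero.mp h) hμν
    · linarith [sub_eq_zero.mp h]
  have hprod : μ * ν = K ^ 2 / 16 := by linear_combination μ * hsum + hμR
  have hd2 : 0 < (μ - ν)^2 := by
    have := sub_ne_zero.mpr hμν; positivity
  have hgt : ξ ^ 2 > K ^ 2 / 4 := by nlinarith [hsum, hprod]
  have hs : ξ ^ 2 - K ^ 2 / 4 = (μ - ν)^2 := by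
    linear_combination -(ξ + μ + ν) * hsum + 4 * hprod
  have hsqrt : Real.sqrt (ξ ^ 2 - K ^ 2 / 4) = |μ - ν| := by
    rw [hs, Real.sqrt_sq_eq_abs]
  refine ⟨hsum, hprod, hgt, ?_⟩
  rcases le_or_gt ν μ with h | h
  · rw [hsqrt, _root_.abs_of_nonneg (by linarith)]
    have e1 : (ξ + (μ - ν)) / 2 = μ := by linarith
    have e2 : (ξ - (μ - ν)) / 2 = ν := by linarith
    rw [e1, e2]
  · rw [hsqrt, _root_.abs_of_neg (by linarith)]
    have e1 : (ξ + -(μ - ν)) / 2 = ν := by linarith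
    have e2 : (ξ - -(μ - ν)) / 2 = μ := by linarith
    rw [e1, e2, Set.pair_comm]
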